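/- For a standard normal random variable, the variance of the truncated distribution conditioned on lying in a half-line is at most 1: if Z ~ N(0,1) and τ ∈ ℝ, then Var(Z | Z > τ) ≤ 1. -/

import Mathlib

open MeasureTheory ProbabilityTheory Filter Set

namespace TruncGauss

noncomputable def φ (x : ℝ) : ℝ := gaussianPDFReal 0 1 x

lemma φ_eq (x : ℝ) : φ x = (Real.sqrt (2 * Real.pi))⁻¹ * Real.exp (-x ^ 2 / 2) := by
  simp [φ, gaussianPDFReal]

lemma φ_nonneg (x : ℝ) : 0 ≤ φ x := gaussianPDFReal_nonneg 0 1 x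

lemma φ_meas : Measurable φ := measurable_gaussianPDFReal 0 1

lemma exp_eq (x : ℝ) : -x ^ 2 / 2 = -(1 / 2 : ℝ) * x ^ 2 := by ring

/-- Integrability of `x^s * exp (-x^2/2)` for natural power. -/
lemma integrable_pow_mul (n : ℕ) :
    Integrable (fun x : ℝ => x ^ n * Real.exp (-x ^ 2 / 2)) := by
  have h := integrable_rpow_mul_exp_neg_mul_sq (by norm_num : (0 : ℝ) < 1 / 2)
    (show (-1 : ℝ) < (n : ℝ) from lt_of_lt_of_le neg_one_lt_zero (Nat.cast_nonneg n))
  refine h.congr ?_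
  filter_upwards with x
  rw [Real.rpow_natCast, exp_eq]

lemma integrable_φ : Integrable φ := integrable_gaussianPDFReal 0 1

lemma integrable_mul_φ : Integrable (fun x : ℝ => x * φ x) := by
  have := (integrable_pow_mul 1).const_mul (Real.sqrt (2 * Real.pi))⁻¹
  refine this.congr ?_
  filter_upwards with x
  rw [φ_eq]; ring

lemma integrable_sq_mul_φ : Integrable (fun x : ℝ => x ^ 2 * φ x) := by
  have := (integrable_pow_mul 2).const_mul (Real.sqrt (2 * Real.pi))⁻¹
  refine this.congr ?_
  filter_upwards with x
  rw [φ_eq]; ring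

lemma hasDerivAt_φ (x : ℝ) : HasDerivAt φ (-x * φ x) x := by
  have h1 : HasDerivAt (fun y : ℝ => -y ^ 2 / 2) (-x) x := by
    have := ((hasDerivAt_pow 2 x).neg).div_const 2
    refine this.congr_deriv ?_
    simp; ring
  have h2 := (h1.exp).const_mul (Real.sqrt (2 * Real.pi))⁻¹
  have heq : (fun y : ℝ => (Real.sqrt (2 * Real.pi))⁻¹ * Real.exp (-y ^ 2 / 2)) = φ := by
    funext y; rw [φ_eq]
  rw [heq] at h2
  refine h2.congr_deriv ?_
  rw [φ_eq]; ring

lemma tendsto_mul_φ : Tendsto (fun x : ℝ => x * φ x) atTop (nhds 0) := by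
  have h := (rpow_mul_exp_neg_mul_sq_isLittleO_exp_neg (by norm_num : (0 : ℝ) < 1 / 2) 1)
  have h2 : Tendsto (fun x : ℝ => Real.exp (-(1 / 2) * x)) atTop (nhds 0) := by
    have : Tendsto (fun x : ℝ => -(1 / 2) * x) atTop atBot :=
      tendsto_id.const_mul_atTop_of_neg (by norm_num)
    exact Real.tendsto_exp_atBot.comp this
  have h3 : Tendsto (fun x : ℝ => x ^ (1 : ℝ) * Real.exp (-(1 / 2) * x ^ 2)) atTop (nhds 0) :=
    h.trans_tendsto h2
  have h4 : Tendsto (fun x : ℝ => x * Real.exp (-x ^ 2 / 2)) atTop (nhds 0) := by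
    refine h3.congr fun x => ?_
    rw [Real.rpow_one, exp_eq]
  have := h4.const_mul (Real.sqrt (2 * Real.pi))⁻¹
  rw [mul_zero] at this
  refine this.congr fun x => ?_
  rw [φ_eq]; ring

lemma tendsto_φ : Tendsto φ atTop (nhds 0) := by
  have h1 : Tendsto (fun x : ℝ => -x ^ 2 / 2) atTop atBot := by
    have : Tendsto (fun x : ℝ => x ^ 2) atTop atTop := tendsto_pow_atTop two_ne_zero
    simp only [neg_div]
    exact tendsto_neg_atBot_iff.mpr (this.atTop_div_const (by norm_num))
  have h2 := Real.tendsto_exp_atBot.comp h1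
  have := h2.const_mul (Real.sqrt (2 * Real.pi))⁻¹
  rw [mul_zero] at this
  refine this.congr fun x => ?_
  rw [φ_eq]; rfl

/-- First truncated moment. -/
lemma integral_mul_φ (τ : ℝ) : ∫ x in Ioi τ, x * φ x = φ τ := by
  have h := integral_Ioi_of_hasDerivAt_of_tendsto' (a := τ)
    (f := fun y => -(φ y)) (f' := fun x => x * φ x)
    (fun x _ => by have := (hasDerivAt_φ x).neg; simp only [neg_mul, neg_neg] at this; exact this)
    integrable_mul_φ.integrableOn
    (by simpa using tendsto_φ.neg)
  simpa using h

lemma integral_sq_sub_one_mul_φ (τ : ℝ) :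
    ∫ x in Ioi τ, (x ^ 2 - 1) * φ x = τ * φ τ := by
  have hderiv : ∀ x : ℝ, HasDerivAt (fun y => -(y * φ y)) ((x ^ 2 - 1) * φ x) x := by
    intro x
    have := ((hasDerivAt_id x).mul (hasDerivAt_φ x)).neg
    refine this.congr_deriv ?_
    simp; ring
  have hint : Integrable (fun x : ℝ => (x ^ 2 - 1) * φ x) := by
    have := integrable_sq_mul_φ.sub integrable_φ
    refine this.congr ?_
    filter_upwards with x
    simp only [Pi.sub_apply]; ring
  have h := integral_Ioi_of_hasDerivAt_of_tendsto' (a := τ)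
    (f := fun y => -(y * φ y)) (f' := fun x => (x ^ 2 - 1) * φ x)
    (fun x _ => hderiv x)
    hint.integrableOn
    (by simpa using tendsto_mul_φ.neg)
  simpa using h

lemma integral_sq_mul_φ (τ : ℝ) :
    ∫ x in Ioi τ, x ^ 2 * φ x = (∫ x in Ioi τ, φ x) + τ * φ τ := by
  have h1 : ∫ x in Ioi τ, (x ^ 2 - 1) * φ x
      = (∫ x in Ioi τ, x ^ 2 * φ x) - ∫ x in Ioi τ, φ x := by
    rw [← integral_sub integrable_sq_mul_φ.integrableOn integrable_φ.integrableOn]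
    refine integral_congr_ae (ae_of_all _ fun x => ?_)
    ring
  have h2 := integral_sq_sub_one_mul_φ τ
  rw [h1] at h2
  linarith

lemma mills (τ : ℝ) (hτ : 0 ≤ τ) : τ * ∫ x in Ioi τ, φ x ≤ φ τ := by
  rw [← integral_mul_φ τ, ← integral_const_mul]
  refine setIntegral_mono_on (integrable_φ.integrableOn.const_mul τ)
    integrable_mul_φ.integrableOn measurableSet_Ioi fun x hx => ?_
  exact mul_le_mul_of_nonneg_right (le_of_lt hx) (φ_nonneg x)

lemma gauss_eq : gaussianReal 0 1
    = volume.withDensity (fun x => ((fun y => (φ y).toNNReal) x : ENNReal)) := by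
  rw [gaussianReal_of_var_ne_zero 0 one_ne_zero]
  rfl

lemma meas_toNNReal : Measurable fun y => (φ y).toNNReal := φ_meas.real_toNNReal

lemma restrict_eq (s : Set ℝ) (hs : MeasurableSet s) :
    (gaussianReal 0 1).restrict s
      = (volume.restrict s).withDensity (fun x => ((fun y => (φ y).toNNReal) x : ENNReal)) := by
  rw [gauss_eq, restrict_withDensity hs]

lemma setIntegral_gauss (s : Set ℝ) (hs : MeasurableSet s) (f : ℝ → ℝ) :
    ∫ x in s, f x ∂(gaussianReal 0 1) = ∫ x in s, φ x * f x := by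
  rw [gauss_eq, setIntegral_withDensity_eq_setIntegral_smul meas_toNNReal f hs]
  refine integral_congr_ae (ae_of_all _ fun x => ?_)
  simp [NNReal.smul_def, Real.coe_toNNReal _ (φ_nonneg x)]

lemma integrableOn_iff (s : Set ℝ) (hs : MeasurableSet s) (f : ℝ → ℝ) :
    Integrable f ((gaussianReal 0 1).restrict s)
      ↔ IntegrableOn (fun x => φ x * f x) s := by
  rw [restrict_eq s hs, integrable_withDensity_iff_integrable_smul meas_toNNReal]
  constructor <;> intro h <;> refine h.congr ?_ <;>
    filter_upwards with x <;>
    simp [NNReal.smul_def, Real.coe_toNNReal _ (φ_nonneg x)]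

end TruncGauss

open TruncGauss

/-- Conditioning a standard normal on a half-line `(τ, ∞)` does not increase its
variance above 1: `Var(Z | Z > τ) ≤ 1`. -/
theorem stmt1 (τ : ℝ) :
    variance id (ProbabilityTheory.cond (gaussianReal 0 1) (Set.Ioi τ)) ≤ 1 := by
  set μ := gaussianReal 0 1 with hμ
  set s := Set.Ioi τ with hsdef
  -- the conditioning set has positive mass
  have hs0 : μ s ≠ 0 := by
    intro h
    have hac := gaussianReal_absolutelyContinuous' 0 (one_ne_zero (α := NNReal))
    have := hac h
    simp [hsdef, Real.volume_Ioi] at this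
  have hstop : μ s ≠ ⊤ := measure_ne_top μ s
  have hprob : IsProbabilityMeasure (μ[|s]) := cond_isProbabilityMeasure hs0
  -- notation for the truncated moments
  set A0 : ℝ := ∫ x in Set.Ioi τ, φ x with hA0
  set p : ℝ := φ τ with hp
  have hA0_nonneg : 0 ≤ A0 := setIntegral_nonneg measurableSet_Ioi fun x _ => φ_nonneg x
  have hr : (μ s).toReal = A0 := by
    rw [hμ, hsdef, gaussianReal_apply_eq_integral 0 one_ne_zero]
    exact ENNReal.toReal_ofReal hA0_nonneg
  have hA0_pos : 0 < A0 := by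
    rw [← hr]
    exact ENNReal.toReal_pos hs0 hstop
  -- integrals with respect to the conditional measure
  have hbridge : ∀ f : ℝ → ℝ,
      ∫ x, f x ∂(μ[|s]) = A0⁻¹ * ∫ x in Set.Ioi τ, φ x * f x := by
    intro f
    rw [ProbabilityTheory.cond, integral_smul_measure, ← hsdef,
      ← setIntegral_gauss s measurableSet_Ioi f, smul_eq_mul, ENNReal.toReal_inv, hr, hsdef]
  have hE1 : ∫ x, x ∂(μ[|s]) = A0⁻¹ * p := by
    rw [hbridge (fun x => x), hp, ← integral_mul_φ τ]
    congr 1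
    exact integral_congr_ae (ae_of_all _ fun x => mul_comm _ _)
  have hE2 : ∫ x, x ^ 2 ∂(μ[|s]) = A0⁻¹ * (A0 + τ * p) := by
    rw [hbridge (fun x => x ^ 2), hp, hA0, ← integral_sq_mul_φ τ]
    congr 1
    exact integral_congr_ae (ae_of_all _ fun x => mul_comm _ _)
  -- id is Memℒp 2
  have hint_sq : Integrable (fun x => x ^ 2) (μ[|s]) := by
    rw [ProbabilityTheory.cond,
      integrable_smul_measure (ENNReal.inv_ne_zero.mpr hstop) (ENNReal.inv_ne_top.mpr hs0),
      integrableOn_iff s measurableSet_Ioi]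
    refine integrable_sq_mul_φ.integrableOn.congr ?_
    filter_upwards with x
    ring
  have hmem : MemLp id 2 (μ[|s]) := by
    rw [memLp_two_iff_integrable_sq aestronglyMeasurable_id]
    exact hint_sq
  rw [variance_eq_sub hmem]
  have hid2 : (μ[|s])[id ^ 2] = ∫ x, x ^ 2 ∂(μ[|s]) := by
    refine integral_congr_ae (ae_of_all _ fun x => ?_)
    simp
  have hid1 : (μ[|s])[id] = ∫ x, x ∂(μ[|s]) := rfl
  rw [hid2, hid1, hE2, hE1]
  -- final algebraic estimate
  set u : ℝ := A0⁻¹ with hu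
  have hu_pos : 0 < u := inv_pos.mpr hA0_pos
  have huA : u * A0 = 1 := inv_mul_cancel₀ (ne_of_gt hA0_pos)
  have hp_nonneg : 0 ≤ p := φ_nonneg τ
  rcases le_or_gt τ 0 with hτ | hτ
  · -- choose c = 0
    nlinarith [sq_nonneg (u * p), mul_nonneg hu_pos.le hp_nonneg,
      mul_nonneg (mul_nonneg hu_pos.le hp_nonneg) (neg_nonneg.mpr hτ)]
  · -- choose c = τ, use Mills' inequality
    have hmills : τ * A0 ≤ p := mills τ hτ.le
    have h1 : τ ≤ u * p := by
      have := mul_le_mul_of_nonneg_left hmills hu_pos.le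
      calc τ = u * (τ * A0) := by rw [show u * (τ * A0) = τ * (u * A0) by ring, huA]; ring
        _ ≤ u * p := this
    nlinarith [sq_nonneg (u * p - τ), mul_le_mul_of_nonneg_left h1 hτ.le]
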